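/- (Theorem 2, optimization form.) Suppose there exists at least one MMDC between A and B. Then the constructed graph G admits a perfect matching, and the minimum of Weight(Main(M)) over all perfect matchings M of G equals the minimum of c(L) over all MMDCs L between A and B. -/

import Mathlib

open Finset

section Construction

variable {s t : ℕ}

/-- The left part `S` of the constructed complete bipartite graph `G`:
`A_i` (`α i` copies of `a_i`), `A'_i` (`α' i − α i` copies of `a_i`),
the dummy sets `X_j` (`β' j − β j` vertices) and `W_j` (`s − β' j` vertices). -/
abbrev LeftV (s t : ℕ) (α α' : Fin s → ℕ) (β β' : Fin t → ℕ) : Type :=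
  ((Σ i : Fin s, Fin (α i)) ⊕ (Σ i : Fin s, Fin (α' i - α i))) ⊕
  ((Σ j : Fin t, Fin (β' j - β j)) ⊕ (Σ j : Fin t, Fin (s - β' j)))

/-- The right part `T` of the constructed graph: the sets `Bset_i` (vertex `(i, j)`
is the copy `b_{ji}` of `b_j` lying in `Bset_i`; thus `B_j = {(i, j) : i}`) together
with the compensator set `Y` of `Σ_i α'_i − Σ_j β_j` dummy vertices. -/
abbrev RightV (s t : ℕ) (α' : Fin s → ℕ) (β : Fin t → ℕ) : Type :=
  (Fin s × Fin t) ⊕ Fin (∑ i, α' i - ∑ j, β j)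

variable {α α' : Fin s → ℕ} {β β' : Fin t → ℕ}

/-- Adjacency in the constructed graph `G`: each vertex of `A_i ∪ A'_i` is joined to every
vertex of `Bset_i`; each vertex of `A'_i` is joined to every vertex of `Y`; each vertex of
`X_j` is joined to every vertex of `B_j` and to every vertex of `Y`; each vertex of `W_j`
is joined to every vertex of `B_j`. -/
def Adj : LeftV s t α α' β β' → RightV s t α' β → Prop
  | .inl (.inl ⟨i, _⟩), .inl (i', _) => i' = i       -- A_i — Bset_i
  | .inl (.inl _), .inr _ => False
  | .inl (.inr ⟨i, _⟩), .inl (i', _) => i' = i       -- A'_i — Bset_i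
  | .inl (.inr _), .inr _ => True                     -- A'_i — Y
  | .inr (.inl ⟨j, _⟩), .inl (_, j') => j' = j       -- X_j — B_j
  | .inr (.inl _), .inr _ => True                     -- X_j — Y
  | .inr (.inr ⟨j, _⟩), .inl (_, j') => j' = j       -- W_j — B_j
  | .inr (.inr _), .inr _ => False

/-- Edge weights of the constructed graph `G`. -/
def wt (δ : Fin s → Fin t → ℝ) (γ' γ'' : ℝ) : LeftV s t α α' β β' → RightV s t α' β → ℝ
  | .inl _, .inl (i, j) => δ i j     -- main edges into b_{ji}
  | .inl (.inl _), .inr _ => 0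
  | .inl (.inr _), .inr _ => γ'      -- A'_i — Y
  | .inr (.inl _), .inl _ => γ'      -- X_j — B_j
  | .inr (.inl _), .inr _ => γ''     -- X_j — Y
  | .inr (.inr _), _ => 0            -- W_j — B_j

/-- An edge is a main edge when it joins `⋃_i (A_i ∪ A'_i)` to `⋃_i Bset_i`. -/
def IsMainEdge : LeftV s t α α' β β' → RightV s t α' β → Bool
  | .inl _, .inl _ => true
  | _, _ => false

/-- A perfect matching of `G` is a bijection between the two parts all of whose
pairs are edges of `G`. -/
def IsPM (M : LeftV s t α α' β β' ≃ RightV s t α' β) : Prop :=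
  ∀ v, Adj v (M v)

/-- `Weight(M)`, the total weight of a perfect matching. -/
noncomputable def totalWeight (δ : Fin s → Fin t → ℝ) (γ' γ'' : ℝ)
    (M : LeftV s t α α' β β' ≃ RightV s t α' β) : ℝ :=
  ∑ v, wt δ γ' γ'' v (M v)

/-- `Weight(Main(M))`, the total weight of the main edges of `M`. -/
noncomputable def mainWeight (δ : Fin s → Fin t → ℝ) (γ' γ'' : ℝ)
    (M : LeftV s t α α' β β' ≃ RightV s t α' β) : ℝ :=
  ∑ v ∈ univ.filter (fun v => IsMainEdge v (M v)), wt δ γ' γ'' v (M v)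

/-- `|Main(M)|`, the number of main edges of `M`. -/
def mainCount (M : LeftV s t α α' β β' ≃ RightV s t α' β) : ℕ :=
  (univ.filter (fun v => IsMainEdge v (M v))).card

/-- `L ⊆ A × B` is an MMDC between `A` and `B`: each `a_i` lies in at least `α i` and at
most `α' i` pairs, and each `b_j` lies in at least `β j` and at most `β' j` pairs. -/
def IsMMDC (α α' : Fin s → ℕ) (β β' : Fin t → ℕ) (L : Finset (Fin s × Fin t)) : Prop :=
  (∀ i, α i ≤ (L.filter (fun p => p.1 = i)).card ∧
    (L.filter (fun p => p.1 = i)).card ≤ α' i) ∧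
  (∀ j, β j ≤ (L.filter (fun p => p.2 = j)).card ∧
    (L.filter (fun p => p.2 = j)).card ≤ β' j)

/-- `c(L)`, the cost of a matching `L` between `A` and `B`. -/
noncomputable def cost (δ : Fin s → Fin t → ℝ) (L : Finset (Fin s × Fin t)) : ℝ :=
  ∑ p ∈ L, δ p.1 p.2

end Construction

section AuxProof
variable {s t : ℕ} {α α' : Fin s → ℕ} {β β' : Fin t → ℕ}

/-- index of an `A ∪ A'` vertex, `none` for dummies -/
def aIdx : LeftV s t α α' β β' → Option (Fin s)
  | .inl (.inl ⟨i, _⟩) => some i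
  | .inl (.inr ⟨i, _⟩) => some i
  | _ => none

/-- index of an `X ∪ W` vertex, `none` otherwise -/
def xwIdx : LeftV s t α α' β β' → Option (Fin t)
  | .inr (.inl ⟨j, _⟩) => some j
  | .inr (.inr ⟨j, _⟩) => some j
  | _ => none

lemma card_column (j : Fin t) :
    ((univ : Finset (Fin s × Fin t)).filter (fun p => p.2 = j)).card = s := by
  have : (univ : Finset (Fin s × Fin t)).filter (fun p => p.2 = j) =
      Finset.map ⟨fun i => (i, j), show Function.Injective _ from fun a b h => by simpa using congrArg Prod.fst h⟩ univ := by
    ext ⟨pi, pj⟩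
    simp only [Finset.mem_filter, Finset.mem_univ, true_and, Finset.mem_map,
      Function.Embedding.coeFn_mk, Prod.mk.injEq]
    constructor
    · rintro rfl; exact ⟨pi, by simp⟩
    · rintro ⟨a, _, rfl, rfl⟩; rfl
  rw [this, Finset.card_map, Finset.card_univ, Fintype.card_fin]

theorem pm_to_mmdc (δ : Fin s → Fin t → ℝ) (γ' γ'' : ℝ)
    (hs : 1 ≤ s) (ht : 1 ≤ t)
    (hαα : ∀ i, α i ≤ α' i) (hββ : ∀ j, β j ≤ β' j) (hβ's : ∀ j, β' j ≤ s)
    (M : LeftV s t α α' β β' ≃ RightV s t α' β) (hM : IsPM M) :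
    ∃ L, IsMMDC α α' β β' L ∧ cost δ L = mainWeight δ γ' γ'' M := by
  classical
  set junk : Fin s × Fin t := (⟨0, hs⟩, ⟨0, ht⟩) with hjunk
  set Lset : Finset (Fin s × Fin t) :=
    univ.filter (fun p => (M.symm (.inl p)).isLeft) with hLset
  refine ⟨Lset, ⟨?_, ?_⟩, ?_⟩
  · -- row degree bounds
    intro i
    set Ti : Finset (LeftV s t α α' β β') :=
      univ.filter (fun v => aIdx v = some i ∧ (M v).isLeft) with hTi
    have hcard : (Lset.filter (fun p => p.1 = i)).card = Ti.card := by
      refine Finset.card_bij (fun p _ => M.symm (.inl p)) ?_ ?_ ?_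
      · intro p hp
        simp only [hLset, Finset.filter_filter, Finset.mem_filter, Finset.mem_univ,
          true_and] at hp
        obtain ⟨hleft, hpi⟩ := hp
        have hadj := hM (M.symm (.inl p))
        rw [Equiv.apply_symm_apply] at hadj
        simp only [hTi, Finset.mem_filter, Finset.mem_univ, true_and]
        obtain ⟨pi, pj⟩ := p
        rcases hv : M.symm (.inl (pi, pj)) with ((⟨i', k⟩ | ⟨i', k⟩) | w)
        · rw [hv] at hadj
          simp only [Adj] at hadj
          refine ⟨by simp [aIdx, hadj, ← hpi], by rw [← hv, Equiv.apply_symm_apply]; rfl⟩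
        · rw [hv] at hadj
          simp only [Adj] at hadj
          refine ⟨by simp [aIdx, hadj, ← hpi], by rw [← hv, Equiv.apply_symm_apply]; rfl⟩
        · rw [hv] at hleft; simp at hleft
      · intro p1 h1 p2 h2 heq
        have := congrArg M heq
        simp only [Equiv.apply_symm_apply] at this
        exact Sum.inl_injective this
      · intro v hv
        simp only [hTi, Finset.mem_filter, Finset.mem_univ, true_and] at hv
        obtain ⟨hidx, hleft⟩ := hv
        rcases hMv : M v with (p | y)
        · refine ⟨p, ?_, by show M.symm (Sum.inl p) = v; rw [← hMv, Equiv.symm_apply_apply]⟩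
          have hadj := hM v
          rw [hMv] at hadj
          simp only [hLset, Finset.filter_filter, Finset.mem_filter, Finset.mem_univ,
            true_and]
          have hvsym : M.symm (.inl p) = v := by rw [← hMv, Equiv.symm_apply_apply]
          obtain ⟨pi, pj⟩ := p
          rcases v with ((⟨i', k⟩ | ⟨i', k⟩) | (⟨j', k⟩ | ⟨j', k⟩)) <;>
            simp only [aIdx, Option.some.injEq, reduceCtorEq] at hidx <;>
            simp only [Adj] at hadj <;>
            refine ⟨by rw [hvsym]; simp, by rw [hadj, hidx]⟩
        · rw [hMv] at hleft; simp at hleft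
    rw [hcard]
    constructor
    · have : (univ : Finset (Fin (α i))).card ≤ Ti.card := by
        refine Finset.card_le_card_of_injOn
          (fun k => (.inl (.inl ⟨i, k⟩) : LeftV s t α α' β β')) ?_ ?_
        · intro k _
          simp only [hTi, Finset.mem_coe, Finset.mem_filter, Finset.mem_univ, true_and]
          refine ⟨rfl, ?_⟩
          have hadj := hM (.inl (.inl ⟨i, k⟩))
          rcases hMv : M (.inl (.inl ⟨i, k⟩)) with (p | y)
          · simp
          · rw [hMv] at hadj; exact absurd hadj (by simp [Adj])
        · intro k1 _ k2 _ heq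
          simpa using heq
      simpa using this
    · have hsub : Ti ⊆ univ.filter (fun v : LeftV s t α α' β β' => aIdx v = some i) := by
        intro v hv
        simp only [hTi, Finset.mem_filter, Finset.mem_univ, true_and] at hv ⊢
        exact hv.1
      have hAcard :
          (univ.filter (fun v : LeftV s t α α' β β' => aIdx v = some i)).card
            = α i + (α' i - α i) := by
        have heq : (univ.filter (fun v : LeftV s t α α' β β' => aIdx v = some i)) =
            (univ.map ⟨fun k : Fin (α i) => (.inl (.inl ⟨i, k⟩) : LeftV s t α α' β β'),
              show Function.Injective _ from fun a b h => by simpa using h⟩) ∪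
            (univ.map ⟨fun k : Fin (α' i - α i) => (.inl (.inr ⟨i, k⟩) : LeftV s t α α' β β'),
              show Function.Injective _ from fun a b h => by simpa using h⟩) := by
          ext v
          simp only [Finset.mem_filter, Finset.mem_univ, true_and, Finset.mem_union,
            Finset.mem_map, Function.Embedding.coeFn_mk]
          constructor
          · intro hv
            rcases v with ((⟨i', k⟩ | ⟨i', k⟩) | (⟨j', k⟩ | ⟨j', k⟩)) <;>
              simp only [aIdx, Option.some.injEq, reduceCtorEq] at hv
            · subst hv; exact Or.inl ⟨k, by simp⟩
            · subst hv; exact Or.inr ⟨k, by simp⟩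
          · rintro (⟨k, rfl⟩ | ⟨k, rfl⟩) <;> rfl
        rw [heq, Finset.card_union_of_disjoint, Finset.card_map, Finset.card_map] <;>
          simp [Finset.disjoint_left]
      calc Ti.card ≤ _ := Finset.card_le_card hsub
        _ = α i + (α' i - α i) := hAcard
        _ = α' i := by have := hαα i; omega
  · -- column degree bounds
    intro j
    set Cj : Finset (Fin s × Fin t) := univ.filter (fun p => p.2 = j) with hCj
    have hsplit :
        (Cj.filter (fun p => (M.symm (.inl p)).isLeft)).card +
        (Cj.filter (fun p => ¬(M.symm (.inl p)).isLeft)).card = s := by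
      rw [Finset.card_filter_add_card_filter_not, hCj, card_column]
    have hLeq : Lset.filter (fun p => p.2 = j) =
        Cj.filter (fun p => (M.symm (.inl p)).isLeft) := by
      ext p
      simp only [hLset, hCj, Finset.filter_filter, Finset.mem_filter, Finset.mem_univ,
        true_and]
      tauto
    set Dj := Cj.filter (fun p => ¬(M.symm (.inl p)).isLeft) with hDj
    have hup : Dj.card ≤ (β' j - β j) + (s - β' j) := by
      have hle : Dj.card ≤
          (univ.filter (fun v : LeftV s t α α' β β' => xwIdx v = some j)).card := by
        refine Finset.card_le_card_of_injOn (fun p => M.symm (.inl p)) ?_ ?_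
        · intro p hp
          simp only [hDj, hCj, Finset.mem_coe, Finset.filter_filter, Finset.mem_filter,
            Finset.mem_univ, true_and] at hp
          obtain ⟨hpj, hnl⟩ := hp
          have hadj := hM (M.symm (.inl p))
          rw [Equiv.apply_symm_apply] at hadj
          simp only [Finset.mem_coe, Finset.mem_filter, Finset.mem_univ, true_and]
          obtain ⟨pi, pj⟩ := p
          have hpj' : pj = j := hpj
          rcases hv : M.symm (.inl (pi, pj)) with ((⟨i', k⟩ | ⟨i', k⟩) | (⟨j', k⟩ | ⟨j', k⟩)) <;>
            rw [hv] at hadj hnl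
          · simp at hnl
          · simp at hnl
          · simp only [Adj] at hadj
            simp only [xwIdx, Option.some.injEq]
            rw [← hadj]; exact hpj'
          · simp only [Adj] at hadj
            simp only [xwIdx, Option.some.injEq]
            rw [← hadj]; exact hpj'
        · intro p1 h1 p2 h2 heq
          have := congrArg M heq
          simp only [Equiv.apply_symm_apply] at this
          exact Sum.inl_injective this
      have hXWcard :
          (univ.filter (fun v : LeftV s t α α' β β' => xwIdx v = some j)).card
            = (β' j - β j) + (s - β' j) := by
        have heq : (univ.filter (fun v : LeftV s t α α' β β' => xwIdx v = some j)) =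
            (univ.map ⟨fun k : Fin (β' j - β j) => (.inr (.inl ⟨j, k⟩) : LeftV s t α α' β β'),
              show Function.Injective _ from fun a b h => by simpa using h⟩) ∪
            (univ.map ⟨fun k : Fin (s - β' j) => (.inr (.inr ⟨j, k⟩) : LeftV s t α α' β β'),
              show Function.Injective _ from fun a b h => by simpa using h⟩) := by
          ext v
          simp only [Finset.mem_filter, Finset.mem_univ, true_and, Finset.mem_union,
            Finset.mem_map, Function.Embedding.coeFn_mk]
          constructor
          · intro hv
            rcases v with ((⟨i', k⟩ | ⟨i', k⟩) | (⟨j', k⟩ | ⟨j', k⟩)) <;>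
              simp only [xwIdx, Option.some.injEq, reduceCtorEq] at hv
            · subst hv; exact Or.inl ⟨k, by simp⟩
            · subst hv; exact Or.inr ⟨k, by simp⟩
          · rintro (⟨k, rfl⟩ | ⟨k, rfl⟩) <;> rfl
        rw [heq, Finset.card_union_of_disjoint, Finset.card_map, Finset.card_map] <;>
          simp [Finset.disjoint_left]
      rw [← hXWcard]; exact hle
    have hlow : s - β' j ≤ Dj.card := by
      have : (univ : Finset (Fin (s - β' j))).card ≤ Dj.card := by
        refine Finset.card_le_card_of_injOn
          (fun k => (M (.inr (.inr ⟨j, k⟩))).elim id (fun _ => junk)) ?_ ?_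
        · intro k _
          have hadj := hM (.inr (.inr ⟨j, k⟩))
          rcases hMv : M (.inr (.inr ⟨j, k⟩)) with (p | y)
          · rw [hMv] at hadj
            simp only [hMv, Sum.elim_inl, id]
            simp only [hDj, hCj, Finset.mem_coe, Finset.filter_filter, Finset.mem_filter,
              Finset.mem_univ, true_and]
            obtain ⟨pi, pj⟩ := p
            simp only [Adj] at hadj
            refine ⟨hadj, ?_⟩
            have : M.symm (.inl (pi, pj)) = .inr (.inr ⟨j, k⟩) := by
              rw [← hMv, Equiv.symm_apply_apply]
            rw [this]; simp
          · rw [hMv] at hadj; exact absurd hadj (by simp [Adj])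
        · intro k1 _ k2 _ heq
          have h1 := hM (.inr (.inr ⟨j, k1⟩))
          have h2 := hM (.inr (.inr ⟨j, k2⟩))
          rcases hMv1 : M (.inr (.inr ⟨j, k1⟩)) with (p1 | y1)
          · rcases hMv2 : M (.inr (.inr ⟨j, k2⟩)) with (p2 | y2)
            · simp only [hMv1, hMv2, Sum.elim_inl, id_eq] at heq
              subst heq
              have h3 := M.injective (hMv1.trans hMv2.symm)
              simpa using h3
            · rw [hMv2] at h2; exact absurd h2 (by simp [Adj])
          · rw [hMv1] at h1; exact absurd h1 (by simp [Adj])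
      simpa using this
    rw [hLeq]
    have h1 := hββ j; have h2 := hβ's j
    omega
  · -- cost equality
    rw [cost, mainWeight]
    refine Finset.sum_bij' (fun p _ => M.symm (.inl p))
      (fun v _ => (M v).elim id (fun _ => junk)) ?_ ?_ ?_ ?_ ?_
    · intro p hp
      simp only [hLset, Finset.mem_filter, Finset.mem_univ, true_and] at hp
      simp only [Finset.mem_filter, Finset.mem_univ, true_and]
      rcases hv : M.symm (.inl p) with (w | w)
      · rw [← hv, Equiv.apply_symm_apply, hv]
        rcases w with (w | w) <;> rfl
      · rw [hv] at hp; simp at hp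
    · intro v hv
      simp only [Finset.mem_filter, Finset.mem_univ, true_and] at hv
      simp only [hLset, Finset.mem_filter, Finset.mem_univ, true_and]
      rcases hMv : M v with (p | y)
      · simp only [hMv, Sum.elim_inl, id]
        have : M.symm (.inl p) = v := by rw [← hMv, Equiv.symm_apply_apply]
        rw [this]
        rcases v with (w | w)
        · simp
        · rw [hMv] at hv; simp [IsMainEdge] at hv
      · rw [hMv] at hv
        rcases v with ((w | w) | (w | w)) <;> simp [IsMainEdge] at hv
    · intro p hp
      show (M (M.symm (Sum.inl p))).elim id (fun _ => junk) = p
      rw [Equiv.apply_symm_apply]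
      simp
    · intro v hv
      simp only [Finset.mem_filter, Finset.mem_univ, true_and] at hv
      show M.symm (Sum.inl ((M v).elim id (fun _ => junk))) = v
      rcases hMv : M v with (p | y)
      · simp only [Sum.elim_inl, id_eq]
        exact (M.symm_apply_eq).mpr hMv.symm
      · rw [hMv] at hv
        rcases v with ((w | w) | (w | w)) <;> simp [IsMainEdge] at hv
    · intro p hp
      simp only [hLset, Finset.mem_filter, Finset.mem_univ, true_and] at hp
      show δ p.1 p.2 = wt δ γ' γ'' (M.symm (Sum.inl p)) (M (M.symm (Sum.inl p)))
      rw [Equiv.apply_symm_apply]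
      obtain ⟨pi, pj⟩ := p
      rcases hv : M.symm (.inl (pi, pj)) with ((⟨i', k⟩ | ⟨i', k⟩) | w)
      · rfl
      · rfl
      · rw [hv] at hp; simp at hp
end AuxProof

section PartB
open Finset

def refin (a b c d : ℕ) (h : a + b = c + d) : Fin a ⊕ Fin b ≃ Fin c ⊕ Fin d :=
  finSumFinEquiv.trans ((finCongr h).trans finSumFinEquiv.symm)

lemma refin_inl_of_lt (a b c d : ℕ) (h : a + b = c + d) (k : Fin a) (hk : (k : ℕ) < c) :
    refin a b c d h (.inl k) = .inl ⟨k, hk⟩ := by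
  have h2 : (finCongr h) (Fin.castAdd b k) = Fin.castAdd d ⟨k, hk⟩ := by ext; simp
  simp only [refin, Equiv.trans_apply, finSumFinEquiv_apply_left, h2,
    finSumFinEquiv_symm_apply_castAdd]

variable {s t : ℕ} {α α' : Fin s → ℕ} {β β' : Fin t → ℕ}

theorem mmdc_to_pm (δ : Fin s → Fin t → ℝ) (γ' γ'' : ℝ)
    (hs : 1 ≤ s) (ht : 1 ≤ t)
    (hαα : ∀ i, α i ≤ α' i) (hββ : ∀ j, β j ≤ β' j) (hβ's : ∀ j, β' j ≤ s)
    (L : Finset (Fin s × Fin t)) (hL : IsMMDC α α' β β' L) :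
    ∃ M : LeftV s t α α' β β' ≃ RightV s t α' β,
      IsPM M ∧ mainWeight δ γ' γ'' M = cost δ L := by
  classical
  set junk : Fin s × Fin t := (⟨0, hs⟩, ⟨0, ht⟩) with hjunk
  set n : Fin s → ℕ := fun i => (L.filter (fun p => p.1 = i)).card with hn
  set m : Fin t → ℕ := fun j => (L.filter (fun p => p.2 = j)).card with hm
  have hn1 : ∀ i, α i ≤ n i := fun i => (hL.1 i).1
  have hn2 : ∀ i, n i ≤ α' i := fun i => (hL.1 i).2
  have hm1 : ∀ j, β j ≤ m j := fun j => (hL.2 j).1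
  have hm2 : ∀ j, m j ≤ β' j := fun j => (hL.2 j).2
  -- fiber cardinalities
  have hc1 : ∀ i : Fin s,
      Fintype.card {q : {p : Fin s × Fin t // p ∈ L} // q.1.1 = i} = n i := by
    intro i
    refine (Fintype.card_congr (Equiv.subtypeSubtypeEquivSubtypeInter
      (fun p : Fin s × Fin t => p ∈ L) (fun p => p.1 = i))).trans ?_
    rw [Fintype.card_subtype]
    congr 1
    ext p
    simp [and_comm]
  have hc3 : ∀ j : Fin t,
      Fintype.card {q : {p : Fin s × Fin t // ¬p ∈ L} // q.1.2 = j} = s - m j := by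
    intro j
    refine (Fintype.card_congr (Equiv.subtypeSubtypeEquivSubtypeInter
      (fun p : Fin s × Fin t => ¬p ∈ L) (fun p => p.2 = j))).trans ?_
    rw [Fintype.card_subtype]
    have h1 : (univ.filter (fun p : Fin s × Fin t => ¬p ∈ L ∧ p.2 = j)) =
        ((univ.filter (fun p : Fin s × Fin t => p.2 = j)).filter (fun p => ¬p ∈ L)) := by
      rw [Finset.filter_filter]
      ext p; simp [and_comm]
    have h2 : ((univ.filter (fun p : Fin s × Fin t => p.2 = j)).filter
          (fun p => p ∈ L)).card +
        ((univ.filter (fun p : Fin s × Fin t => p.2 = j)).filter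
          (fun p => ¬p ∈ L)).card = s := by
      rw [Finset.card_filter_add_card_filter_not, card_column]
    have h3 : ((univ.filter (fun p : Fin s × Fin t => p.2 = j)).filter
        (fun p => p ∈ L)) = L.filter (fun p => p.2 = j) := by
      ext p
      simp only [Finset.filter_filter, Finset.mem_filter, Finset.mem_univ, true_and]
      tauto
    rw [h1]
    rw [h3] at h2
    have h4 : m j = (L.filter (fun p => p.2 = j)).card := by rw [hm]
    have := hm2 j; have := hβ's j
    omega
  have hsn : ∑ i, n i = L.card :=
    (Finset.card_eq_sum_card_fiberwise (f := Prod.fst) (t := univ) (fun x _ => mem_univ _)).symm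
  have hsm : ∑ j, m j = L.card :=
    (Finset.card_eq_sum_card_fiberwise (f := Prod.snd) (t := univ) (fun x _ => mem_univ _)).symm
  have hcard24 : Fintype.card ((Σ i : Fin s, Fin (α' i - n i)) ⊕ (Σ j : Fin t, Fin (m j - β j)))
      = Fintype.card (Fin (∑ i, α' i - ∑ j, β j)) := by
    have e1 : ∑ i, (α' i - n i) = ∑ i, α' i - ∑ i, n i :=
      Finset.sum_tsub_distrib _ (fun i _ => hn2 i)
    have e2 : ∑ j, (m j - β j) = ∑ j, m j - ∑ j, β j :=
      Finset.sum_tsub_distrib _ (fun j _ => hm1 j)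
    have e3 : ∑ i, n i ≤ ∑ i, α' i := Finset.sum_le_sum (fun i _ => hn2 i)
    have e4 : ∑ j, β j ≤ ∑ j, m j := Finset.sum_le_sum (fun j _ => hm1 j)
    simp only [Fintype.card_sum, Fintype.card_sigma, Fintype.card_fin]
    rw [e1, e2, hsn, hsm] at *
    omega
  -- the pieces of the matching
  have e1 : ∀ i : Fin s, Fin (n i) ≃ {q : {p : Fin s × Fin t // p ∈ L} // q.1.1 = i} :=
    fun i => Fintype.equivOfCardEq (by rw [hc1 i, Fintype.card_fin])
  have e3 : ∀ j : Fin t, Fin (s - m j) ≃ {q : {p : Fin s × Fin t // ¬p ∈ L} // q.1.2 = j} :=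
    fun j => Fintype.equivOfCardEq (by rw [hc3 j, Fintype.card_fin])
  have e24 : ((Σ i : Fin s, Fin (α' i - n i)) ⊕ (Σ j : Fin t, Fin (m j - β j)))
      ≃ Fin (∑ i, α' i - ∑ j, β j) := Fintype.equivOfCardEq hcard24
  let gA : ∀ i : Fin s, Fin (α i) ⊕ Fin (α' i - α i) ≃ Fin (n i) ⊕ Fin (α' i - n i) :=
    fun i => refin _ _ _ _ (by have := hαα i; have := hn1 i; have := hn2 i; omega)
  let gX : ∀ j : Fin t, Fin (s - β' j) ⊕ Fin (β' j - β j) ≃ Fin (s - m j) ⊕ Fin (m j - β j) :=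
    fun j => refin _ _ _ _
      (by have := hββ j; have := hβ's j; have := hm1 j; have := hm2 j; omega)
  let eLA : (Σ i : Fin s, Fin (α i)) ⊕ (Σ i : Fin s, Fin (α' i - α i))
      ≃ (Σ i : Fin s, Fin (n i)) ⊕ (Σ i : Fin s, Fin (α' i - n i)) :=
    (Equiv.sigmaSumDistrib _ _).symm.trans
      ((Equiv.sigmaCongrRight gA).trans (Equiv.sigmaSumDistrib _ _))
  let eLX : (Σ j : Fin t, Fin (β' j - β j)) ⊕ (Σ j : Fin t, Fin (s - β' j))
      ≃ (Σ j : Fin t, Fin (s - m j)) ⊕ (Σ j : Fin t, Fin (m j - β j)) :=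
    (Equiv.sumComm _ _).trans ((Equiv.sigmaSumDistrib _ _).symm.trans
      ((Equiv.sigmaCongrRight gX).trans (Equiv.sigmaSumDistrib _ _)))
  let eL : LeftV s t α α' β β' ≃
      (((Σ i : Fin s, Fin (n i)) ⊕ (Σ j : Fin t, Fin (s - m j))) ⊕
       ((Σ i : Fin s, Fin (α' i - n i)) ⊕ (Σ j : Fin t, Fin (m j - β j)))) :=
    (eLA.sumCongr eLX).trans (Equiv.sumSumSumComm _ _ _ _)
  let eP1 : (Σ i : Fin s, Fin (n i)) ≃ {p : Fin s × Fin t // p ∈ L} :=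
    (Equiv.sigmaCongrRight e1).trans
      (Equiv.sigmaFiberEquiv (fun q : {p : Fin s × Fin t // p ∈ L} => q.1.1))
  let eP3 : (Σ j : Fin t, Fin (s - m j)) ≃ {p : Fin s × Fin t // ¬p ∈ L} :=
    (Equiv.sigmaCongrRight e3).trans
      (Equiv.sigmaFiberEquiv (fun q : {p : Fin s × Fin t // ¬p ∈ L} => q.1.2))
  let eR : (({p : Fin s × Fin t // p ∈ L} ⊕ {p : Fin s × Fin t // ¬p ∈ L}) ⊕
      Fin (∑ i, α' i - ∑ j, β j)) ≃ RightV s t α' β :=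
    (Equiv.sumCompl _).sumCongr (Equiv.refl _)
  let M : LeftV s t α α' β β' ≃ RightV s t α' β :=
    eL.trans (((eP1.sumCongr eP3).sumCongr e24).trans eR)
  -- the four tracking facts
  have F1 : ∀ (i : Fin s) (k : Fin (α i)), ∃ p : Fin s × Fin t,
      p ∈ L ∧ p.1 = i ∧ M (.inl (.inl ⟨i, k⟩)) = .inl p := by
    intro i k
    have hk : (k : ℕ) < n i := lt_of_lt_of_le k.2 (hn1 i)
    have h1 : eL (.inl (.inl ⟨i, k⟩)) = .inl (.inl ⟨i, ⟨(k : ℕ), hk⟩⟩) := by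
      show (Equiv.sumSumSumComm _ _ _ _) (.inl (eLA (.inl ⟨i, k⟩))) = _
      have h3 : eLA (.inl ⟨i, k⟩) =
          (Equiv.sigmaSumDistrib (fun i => Fin (n i)) (fun i => Fin (α' i - n i)))
            ⟨i, gA i (.inl k)⟩ := rfl
      rw [h3, show gA i (.inl k) = .inl ⟨(k : ℕ), hk⟩ from refin_inl_of_lt _ _ _ _ _ k hk]
      rfl
    refine ⟨((e1 i ⟨(k : ℕ), hk⟩).1 : {p : Fin s × Fin t // p ∈ L}).1,
      ((e1 i ⟨(k : ℕ), hk⟩).1).2, (e1 i ⟨(k : ℕ), hk⟩).2, ?_⟩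
    show eR (((eP1.sumCongr eP3).sumCongr e24) (eL (.inl (.inl ⟨i, k⟩)))) = _
    rw [h1]
    rfl
  have F2 : ∀ (i : Fin s) (k : Fin (α' i - α i)),
      (∃ p : Fin s × Fin t, p ∈ L ∧ p.1 = i ∧ M (.inl (.inr ⟨i, k⟩)) = .inl p) ∨
      (∃ y, M (.inl (.inr ⟨i, k⟩)) = .inr y) := by
    intro i k
    have h0 : eLA (.inr ⟨i, k⟩) =
        (Equiv.sigmaSumDistrib (fun i => Fin (n i)) (fun i => Fin (α' i - n i)))
          ⟨i, gA i (.inr k)⟩ := rfl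
    rcases hg : gA i (.inr k) with k' | k'
    · left
      have h1 : eL (.inl (.inr ⟨i, k⟩)) = .inl (.inl ⟨i, k'⟩) := by
        show (Equiv.sumSumSumComm _ _ _ _) (.inl (eLA (.inr ⟨i, k⟩))) = _
        rw [h0, hg]
        rfl
      refine ⟨((e1 i k').1 : {p : Fin s × Fin t // p ∈ L}).1,
        ((e1 i k').1).2, (e1 i k').2, ?_⟩
      show eR (((eP1.sumCongr eP3).sumCongr e24) (eL (.inl (.inr ⟨i, k⟩)))) = _
      rw [h1]
      rfl
    · right
      have h1 : eL (.inl (.inr ⟨i, k⟩)) = .inr (.inl ⟨i, k'⟩) := by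
        show (Equiv.sumSumSumComm _ _ _ _) (.inl (eLA (.inr ⟨i, k⟩))) = _
        rw [h0, hg]
        rfl
      refine ⟨e24 (.inl ⟨i, k'⟩), ?_⟩
      show eR (((eP1.sumCongr eP3).sumCongr e24) (eL (.inl (.inr ⟨i, k⟩)))) = _
      rw [h1]
      rfl
  have F3 : ∀ (j : Fin t) (k : Fin (β' j - β j)),
      (∃ p : Fin s × Fin t, ¬p ∈ L ∧ p.2 = j ∧ M (.inr (.inl ⟨j, k⟩)) = .inl p) ∨
      (∃ y, M (.inr (.inl ⟨j, k⟩)) = .inr y) := by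
    intro j k
    have h0 : eLX (.inl ⟨j, k⟩) =
        (Equiv.sigmaSumDistrib (fun j => Fin (s - m j)) (fun j => Fin (m j - β j)))
          ⟨j, gX j (.inr k)⟩ := rfl
    rcases hg : gX j (.inr k) with k' | k'
    · left
      have h1 : eL (.inr (.inl ⟨j, k⟩)) = .inl (.inr ⟨j, k'⟩) := by
        show (Equiv.sumSumSumComm _ _ _ _) (.inr (eLX (.inl ⟨j, k⟩))) = _
        rw [h0, hg]
        rfl
      refine ⟨((e3 j k').1 : {p : Fin s × Fin t // ¬p ∈ L}).1,
        ((e3 j k').1).2, (e3 j k').2, ?_⟩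
      show eR (((eP1.sumCongr eP3).sumCongr e24) (eL (.inr (.inl ⟨j, k⟩)))) = _
      rw [h1]
      rfl
    · right
      have h1 : eL (.inr (.inl ⟨j, k⟩)) = .inr (.inr ⟨j, k'⟩) := by
        show (Equiv.sumSumSumComm _ _ _ _) (.inr (eLX (.inl ⟨j, k⟩))) = _
        rw [h0, hg]
        rfl
      refine ⟨e24 (.inr ⟨j, k'⟩), ?_⟩
      show eR (((eP1.sumCongr eP3).sumCongr e24) (eL (.inr (.inl ⟨j, k⟩)))) = _
      rw [h1]
      rfl
  have F4 : ∀ (j : Fin t) (k : Fin (s - β' j)), ∃ p : Fin s × Fin t,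
      ¬p ∈ L ∧ p.2 = j ∧ M (.inr (.inr ⟨j, k⟩)) = .inl p := by
    intro j k
    have hk : (k : ℕ) < s - m j := by
      have := k.2; have := hm2 j; have := hβ's j; omega
    have h1 : eL (.inr (.inr ⟨j, k⟩)) = .inl (.inr ⟨j, ⟨(k : ℕ), hk⟩⟩) := by
      show (Equiv.sumSumSumComm _ _ _ _) (.inr (eLX (.inr ⟨j, k⟩))) = _
      have h3 : eLX (.inr ⟨j, k⟩) =
          (Equiv.sigmaSumDistrib (fun j => Fin (s - m j)) (fun j => Fin (m j - β j)))
            ⟨j, gX j (.inl k)⟩ := rfl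
      rw [h3, show gX j (.inl k) = .inl ⟨(k : ℕ), hk⟩ from refin_inl_of_lt _ _ _ _ _ k hk]
      rfl
    refine ⟨((e3 j ⟨(k : ℕ), hk⟩).1 : {p : Fin s × Fin t // ¬p ∈ L}).1,
      ((e3 j ⟨(k : ℕ), hk⟩).1).2, (e3 j ⟨(k : ℕ), hk⟩).2, ?_⟩
    show eR (((eP1.sumCongr eP3).sumCongr e24) (eL (.inr (.inr ⟨j, k⟩)))) = _
    rw [h1]
    rfl
  refine ⟨M, ?_, ?_⟩
  · -- perfect matching
    intro v
    rcases v with ((⟨i, k⟩ | ⟨i, k⟩) | (⟨j, k⟩ | ⟨j, k⟩))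
    · obtain ⟨p, hpL, hpi, hMp⟩ := F1 i k
      rw [hMp]
      obtain ⟨p1, p2⟩ := p
      exact hpi
    · rcases F2 i k with ⟨p, hpL, hpi, hMp⟩ | ⟨y, hMp⟩
      · rw [hMp]; obtain ⟨p1, p2⟩ := p; exact hpi
      · rw [hMp]; trivial
    · rcases F3 j k with ⟨p, hpL, hpj, hMp⟩ | ⟨y, hMp⟩
      · rw [hMp]; obtain ⟨p1, p2⟩ := p; exact hpj
      · rw [hMp]; trivial
    · obtain ⟨p, hpL, hpj, hMp⟩ := F4 j k
      rw [hMp]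
      obtain ⟨p1, p2⟩ := p
      exact hpj
  · -- main weight equals cost
    rw [cost, mainWeight]
    refine Finset.sum_bij' (fun v _ => (M v).elim id (fun _ => junk))
      (fun p _ => M.symm (.inl p)) ?_ ?_ ?_ ?_ ?_
    · intro v hv
      simp only [Finset.mem_filter, Finset.mem_univ, true_and] at hv
      rcases v with ((⟨i, k⟩ | ⟨i, k⟩) | (⟨j, k⟩ | ⟨j, k⟩))
      · obtain ⟨p, hpL, hpi, hMp⟩ := F1 i k
        simp only [hMp, Sum.elim_inl, id_eq]; exact hpL
      · rcases F2 i k with ⟨p, hpL, hpi, hMp⟩ | ⟨y, hMp⟩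
        · simp only [hMp, Sum.elim_inl, id_eq]; exact hpL
        · rw [hMp] at hv; simp [IsMainEdge] at hv
      · rw [show IsMainEdge (.inr (.inl ⟨j, k⟩) : LeftV s t α α' β β')
            (M (.inr (.inl ⟨j, k⟩))) = false from by
          rcases M (.inr (.inl ⟨j, k⟩)) <;> rfl] at hv
        simp at hv
      · rw [show IsMainEdge (.inr (.inr ⟨j, k⟩) : LeftV s t α α' β β')
            (M (.inr (.inr ⟨j, k⟩))) = false from by
          rcases M (.inr (.inr ⟨j, k⟩)) <;> rfl] at hv
        simp at hv
    · intro p hp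
      simp only [Finset.mem_filter, Finset.mem_univ, true_and]
      have hMp : M (M.symm (.inl p)) = .inl p := M.apply_symm_apply _
      rcases hv : M.symm (.inl p) with ((⟨i, k⟩ | ⟨i, k⟩) | (⟨j, k⟩ | ⟨j, k⟩)) <;>
        rw [hv] at hMp
      · rw [hMp]; rfl
      · rw [hMp]; rfl
      · rcases F3 j k with ⟨p', hpL, hpj, hMp'⟩ | ⟨y, hMp'⟩
        · rw [hMp'] at hMp
          exact absurd (Sum.inl_injective hMp ▸ hp) hpL
        · rw [hMp'] at hMp; simp at hMp
      · obtain ⟨p', hpL, hpj, hMp'⟩ := F4 j k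
        rw [hMp'] at hMp
        exact absurd (Sum.inl_injective hMp ▸ hp) hpL
    · intro v hv
      show M.symm (Sum.inl ((M v).elim id (fun _ => junk))) = v
      simp only [Finset.mem_filter, Finset.mem_univ, true_and] at hv
      rcases hMv : M v with (p | y)
      · simp only [Sum.elim_inl, id_eq]
        exact (M.symm_apply_eq).mpr hMv.symm
      · rw [hMv] at hv
        rcases v with ((w | w) | (w | w)) <;> simp [IsMainEdge] at hv
    · intro p hp
      show (M (M.symm (Sum.inl p))).elim id (fun _ => junk) = p
      rw [Equiv.apply_symm_apply]
      simp
    · intro v hv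
      simp only [Finset.mem_filter, Finset.mem_univ, true_and] at hv
      rcases v with ((⟨i, k⟩ | ⟨i, k⟩) | (⟨j, k⟩ | ⟨j, k⟩))
      · obtain ⟨p, hpL, hpi, hMp⟩ := F1 i k
        simp only [hMp, Sum.elim_inl, id_eq]
        obtain ⟨p1, p2⟩ := p
        rfl
      · rcases F2 i k with ⟨p, hpL, hpi, hMp⟩ | ⟨y, hMp⟩
        · simp only [hMp, Sum.elim_inl, id_eq]; obtain ⟨p1, p2⟩ := p; rfl
        · rw [hMp] at hv; simp [IsMainEdge] at hv
      · rw [show IsMainEdge (.inr (.inl ⟨j, k⟩) : LeftV s t α α' β β')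
            (M (.inr (.inl ⟨j, k⟩))) = false from by
          rcases M (.inr (.inl ⟨j, k⟩)) <;> rfl] at hv
        simp at hv
      · rw [show IsMainEdge (.inr (.inr ⟨j, k⟩) : LeftV s t α α' β β')
            (M (.inr (.inr ⟨j, k⟩))) = false from by
          rcases M (.inr (.inr ⟨j, k⟩)) <;> rfl] at hv
        simp at hv
end PartB


/-- **Theorem 2, optimization form.** If there exists at least one MMDC
between `A` and `B`, then the constructed graph `G` admits a perfect matching, and the
minimum of `Weight(Main(M))` over all perfect matchings `M` of `G` equals the minimum of
`c(L)` over all MMDCs `L` between `A` and `B`. -/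
theorem min_mainWeight_eq_min_cost {s t : ℕ} (α α' : Fin s → ℕ) (β β' : Fin t → ℕ)
    (δ : Fin s → Fin t → ℝ) (γ' γ'' : ℝ)
    (hs : 1 ≤ s) (ht : 1 ≤ t)
    (hδ0 : ∀ i j, 0 ≤ δ i j)
    (hα1 : ∀ i, 1 ≤ α i) (hαα : ∀ i, α i ≤ α' i) (hα't : ∀ i, α' i ≤ t)
    (hβ1 : ∀ j, 1 ≤ β j) (hββ : ∀ j, β j ≤ β' j) (hβ's : ∀ j, β' j ≤ s)
    (hsum : ∑ j, β j ≤ ∑ i, α' i)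
    (hγ' : ∀ i j, δ i j < γ') (hγ'' : γ' < γ'')
    (hex : ∃ L, IsMMDC α α' β β' L) :
    (∃ M : LeftV s t α α' β β' ≃ RightV s t α' β, IsPM M) ∧
    ∃ m : ℝ,
      IsLeast {x : ℝ | ∃ M : LeftV s t α α' β β' ≃ RightV s t α' β,
        IsPM M ∧ x = mainWeight δ γ' γ'' M} m ∧
      IsLeast {x : ℝ | ∃ L, IsMMDC α α' β β' L ∧ x = cost δ L} m := by
  classical
  obtain ⟨L0, hL0⟩ := hex
  obtain ⟨M0, hM0, -⟩ := mmdc_to_pm δ γ' γ'' hs ht hαα hββ hβ's L0 hL0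
  refine ⟨⟨M0, hM0⟩, ?_⟩
  set F : Finset (Finset (Fin s × Fin t)) :=
    univ.filter (fun L => IsMMDC α α' β β' L) with hF
  have hFne : F.Nonempty := ⟨L0, by simp [hF, hL0]⟩
  obtain ⟨Lm, hLmF, hLmmin⟩ := Finset.exists_min_image F (cost δ) hFne
  have hLm : IsMMDC α α' β β' Lm := by
    simp only [hF, Finset.mem_filter, Finset.mem_univ, true_and] at hLmF
    exact hLmF
  refine ⟨cost δ Lm, ⟨?_, ?_⟩, ⟨⟨Lm, hLm, rfl⟩, ?_⟩⟩
  · obtain ⟨M1, hM1, hw⟩ := mmdc_to_pm δ γ' γ'' hs ht hαα hββ hβ's Lm hLm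
    exact ⟨M1, hM1, hw.symm⟩
  · rintro x ⟨M, hMpm, rfl⟩
    obtain ⟨L, hLmmdc, hcost⟩ := pm_to_mmdc δ γ' γ'' hs ht hαα hββ hβ's M hMpm
    rw [← hcost]
    exact hLmmin L (by simp [hF, hLmmdc])
  · rintro x ⟨L, hL', rfl⟩
    exact hLmmin L (by simp [hF, hL'])
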